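/- Let C2⊥ ⊆ C1 ⊆ F_2^n with dim C1 − dim C2⊥ = k, let the mirrored codes be C4⊥ = C1⊥ and C3 = C2, and let A and B be k×n matrices of rank k such that C1 = C2⊥ ⊕ rowspace(A) and C3 = C4⊥ ⊕ rowspace(B). Then the k×k matrix U = A Bᵀ over F_2 is invertible. -/

import Mathlib

open Matrix

/-- The dual code of a binary linear code, w.r.t. the standard bilinear form. -/
def dualCode {n : ℕ} (S : Submodule (ZMod 2) (Fin n → ZMod 2)) :
    Submodule (ZMod 2) (Fin n → ZMod 2) where
  carrier := {v | ∀ u ∈ S, u ⬝ᵥ v = 0}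
  add_mem' := by
    intro a b ha hb u hu
    simp [dotProduct_add, ha u hu, hb u hu]
  zero_mem' := by intro u hu; simp
  smul_mem' := by
    intro c a ha u hu
    simp [dotProduct_smul, ha u hu]

/-- The dot product as a bilinear form over `F_2`. -/
def dotForm (n : ℕ) : LinearMap.BilinForm (ZMod 2) (Fin n → ZMod 2) :=
  LinearMap.mk₂ (ZMod 2) (fun u v => u ⬝ᵥ v)
    (fun a b c => add_dotProduct a b c)
    (fun r a b => smul_dotProduct r a b)
    (fun a b c => dotProduct_add a b c)
    (fun r a b => dotProduct_smul r a b)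

lemma dotForm_apply {n : ℕ} (u v : Fin n → ZMod 2) : dotForm n u v = u ⬝ᵥ v := rfl

lemma dualCode_eq_orthogonal {n : ℕ} (S : Submodule (ZMod 2) (Fin n → ZMod 2)) :
    dualCode S = (dotForm n).orthogonal S := by
  ext v
  constructor
  · intro hv u hu
    exact hv u hu
  · intro hv u hu
    exact hv u hu

lemma dotForm_nondegenerate (n : ℕ) : (dotForm n).Nondegenerate := by
  refine ⟨fun m hm => ?_, fun m hm => ?_⟩
  · funext i
    have := hm (Pi.single i 1)
    rw [dotForm_apply, dotProduct_single] at this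
    simpa using this
  · funext i
    have := hm (Pi.single i 1)
    rw [dotForm_apply, single_dotProduct] at this
    simpa using this

lemma dotForm_isRefl (n : ℕ) : (dotForm n).IsRefl := by
  intro x y h
  rw [dotForm_apply, dotProduct_comm]
  exact h

lemma dualCode_dualCode {n : ℕ} (S : Submodule (ZMod 2) (Fin n → ZMod 2)) :
    dualCode (dualCode S) = S := by
  rw [dualCode_eq_orthogonal, dualCode_eq_orthogonal]
  exact LinearMap.BilinForm.orthogonal_orthogonal (dotForm_nondegenerate n) (dotForm_isRefl n) S

/-- for mirrored CSS codes (`C4perp = C1⊥`, `C3 = C2`) with coset-representative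
matrices `A` and `B`, the `k × k` matrix `U = A * Bᵀ` over `F_2` is invertible. -/
theorem mirrored_ABt_invertible {n k : ℕ}
    (C1 C2perp : Submodule (ZMod 2) (Fin n → ZMod 2))
    (h21 : C2perp ≤ C1)
    (A B : Matrix (Fin k) (Fin n) (ZMod 2))
    (hA : LinearIndependent (ZMod 2) (fun i => A i))
    (hB : LinearIndependent (ZMod 2) (fun i => B i))
    (h1 : C1 = C2perp ⊔ Submodule.span (ZMod 2) (Set.range (fun i => A i)))
    (hint1 : C2perp ⊓ Submodule.span (ZMod 2) (Set.range (fun i => A i)) = ⊥)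
    (h3 : dualCode C2perp = dualCode C1 ⊔ Submodule.span (ZMod 2) (Set.range (fun i => B i)))
    (hint3 : dualCode C1 ⊓ Submodule.span (ZMod 2) (Set.range (fun i => B i)) = ⊥) :
    IsUnit (A * B.transpose) := by
  rw [← Matrix.vecMul_injective_iff_isUnit]
  suffices key : ∀ a : Fin k → ZMod 2, Matrix.vecMul a (A * B.transpose) = 0 → a = 0 by
    intro a b hab
    simp only at hab
    have h0 : Matrix.vecMul (a - b) (A * B.transpose) = 0 := by
      rw [Matrix.sub_vecMul, hab, sub_self]
    exact sub_eq_zero.mp (key _ h0)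
  intro a ha
  -- let v be the combination of rows of A given by a
  set v : Fin n → ZMod 2 := Matrix.vecMul a A with hv
  have hvsum : v = ∑ i, a i • A i := by
    rw [hv]; ext j
    simp [Matrix.vecMul, dotProduct, Finset.sum_apply, mul_comm]
  -- v is in the span of the rows of A
  have hvspan : v ∈ Submodule.span (ZMod 2) (Set.range (fun i => A i)) := by
    rw [hvsum]
    exact Submodule.sum_mem _ fun i _ =>
      Submodule.smul_mem _ _ (Submodule.subset_span ⟨i, rfl⟩)
  -- v is in C1
  have hvC1 : v ∈ C1 := by
    rw [h1]
    exact Submodule.mem_sup_right hvspan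
  -- v is orthogonal to every row of B
  have hvB : ∀ i, v ⬝ᵥ B i = 0 := by
    intro i
    have h := congrFun ha i
    rw [← Matrix.vecMul_vecMul] at h
    simpa [hv, Matrix.vecMul, dotProduct, Matrix.transpose_apply] using h
  -- v is orthogonal to everything in the span of rows of B
  have hvBspan : ∀ w ∈ Submodule.span (ZMod 2) (Set.range (fun i => B i)), v ⬝ᵥ w = 0 := by
    intro w hw
    induction hw using Submodule.span_induction with
    | mem x hx => obtain ⟨i, rfl⟩ := hx; exact hvB i
    | zero => simp
    | add x y _ _ hx hy => rw [dotProduct_add, hx, hy, add_zero]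
    | smul c x _ hx => rw [dotProduct_smul, hx, smul_zero]
  -- hence v lies in the double dual of C2perp, which is C2perp
  have hvC2 : v ∈ C2perp := by
    rw [← dualCode_dualCode C2perp]
    intro u hu
    rw [h3] at hu
    obtain ⟨w1, hw1, w2, hw2, rfl⟩ := Submodule.mem_sup.mp hu
    rw [add_dotProduct, dotProduct_comm w1 v, hw1 v hvC1,
      dotProduct_comm w2 v, hvBspan w2 hw2, add_zero]
  -- so v = 0 by the trivial intersection
  have hv0 : v = 0 := by
    have : v ∈ C2perp ⊓ Submodule.span (ZMod 2) (Set.range (fun i => A i)) := ⟨hvC2, hvspan⟩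
    rw [hint1] at this
    exact this
  -- linear independence of rows of A gives a = 0
  funext i
  have := Fintype.linearIndependent_iff.mp hA a (by rw [← hvsum, hv0])
  exact this i
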